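/- Let U : ℝ → ℝ be C² with U(ζ) → ∞ as ζ → ±∞, and let F = U'. Suppose ζ : [0,∞) → ℝ is C¹, bounded, and satisfies (1/(4π))·ζ'(t) + F(ζ(t)) = λ(t) for all t ≥ 0, where λ : [0,∞) → ℝ is continuous with λ(t) → 0 as t → ∞. Assume further that the zero set Q = {q : F(q) = 0} contains no nondegenerate interval [a,b] with a < b. Then there exists q₊ ∈ ℝ with F(q₊) = 0 such that ζ(t) → q₊ as t → ∞. -/

import Mathlib

open Real Filter Set

/-- Helper: if `f` stays below `p` at some time `t₁ ≥ T` and `f` has negative derivative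
whenever its value is in `[p,q]` (at times `≥ T`), then `f` never reaches `q` after `t₁`. -/
lemma aux_no_upcrossing (f : ℝ → ℝ) (hc : ContinuousOn f (Ici 0))
    (hd : ∀ t > (0:ℝ), DifferentiableAt ℝ f t)
    (p q T : ℝ) (hpq : p < q) (hT : 0 < T)
    (hder : ∀ t ≥ T, f t ∈ Icc p q → deriv f t < 0)
    (t₁ : ℝ) (ht₁ : T ≤ t₁) (hft₁ : f t₁ < p) :
    ∀ t₂ ≥ t₁, f t₂ < q := by
  intro t₂ ht₂
  by_contra hcon
  push_neg at hcon
  have ht₁0 : (0:ℝ) < t₁ := lt_of_lt_of_le hT ht₁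
  have hsub : Icc t₁ t₂ ⊆ Ici (0:ℝ) := fun x hx => le_of_lt (lt_of_lt_of_le ht₁0 hx.1)
  have hcf : ContinuousOn f (Icc t₁ t₂) := hc.mono hsub
  -- first entrance into [q, ∞) after t₁
  set B : Set ℝ := {t ∈ Icc t₁ t₂ | q ≤ f t} with hB
  have hBclosed : IsClosed B := by
    have : B = Icc t₁ t₂ ∩ f ⁻¹' Ici q := by
      ext x; constructor <;> exact fun h => ⟨h.1, h.2⟩
    rw [this]
    exact hcf.preimage_isClosed_of_isClosed isClosed_Icc isClosed_Ici
  have hBne : B.Nonempty := ⟨t₂, ⟨⟨ht₂, le_refl _⟩, hcon⟩⟩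
  have hBbdd : BddBelow B := ⟨t₁, fun x hx => hx.1.1⟩
  set s := sInf B with hs
  have hsB : s ∈ B := hBclosed.csInf_mem hBne hBbdd
  have hst₁ : t₁ ≤ s := hsB.1.1
  have hfs : q ≤ f s := hsB.2
  have hbefore : ∀ t, t₁ ≤ t → t < s → f t < q := by
    intro t h1 h2
    by_contra hcc
    push_neg at hcc
    exact absurd (csInf_le hBbdd ⟨⟨h1, le_trans (le_of_lt h2) hsB.1.2⟩, hcc⟩) (not_le.2 h2)
  -- last exit from (-∞, p] before s
  set A : Set ℝ := {t ∈ Icc t₁ s | f t ≤ p} with hA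
  have hAclosed : IsClosed A := by
    have : A = Icc t₁ s ∩ f ⁻¹' Iic p := by
      ext x; constructor <;> exact fun h => ⟨h.1, h.2⟩
    rw [this]
    exact (hcf.mono (Icc_subset_Icc le_rfl hsB.1.2)).preimage_isClosed_of_isClosed
      isClosed_Icc isClosed_Iic
  have hAne : A.Nonempty := ⟨t₁, ⟨⟨le_refl _, hst₁⟩, le_of_lt hft₁⟩⟩
  have hAbdd : BddAbove A := ⟨s, fun x hx => hx.1.2⟩
  set r := sSup A with hr
  have hrA : r ∈ A := hAclosed.csSup_mem hAne hAbdd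
  have hrt₁ : t₁ ≤ r := hrA.1.1
  have hrs : r ≤ s := hrA.1.2
  have hfr : f r ≤ p := hrA.2
  have hafter : ∀ t, r < t → t ≤ s → p < f t := by
    intro t h1 h2
    by_contra hcc
    push_neg at hcc
    exact absurd (le_csSup hAbdd ⟨⟨le_trans hrt₁ (le_of_lt h1), h2⟩, hcc⟩) (not_le.2 h1)
  have hrltS : r < s := by
    rcases lt_or_eq_of_le hrs with h | h
    · exact h
    · exfalso; rw [h] at hfr; linarith
  -- f is strictly decreasing on [r, s]
  have hanti : StrictAntiOn f (Icc r s) := by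
    apply strictAntiOn_of_deriv_neg (convex_Icc r s)
    · exact hcf.mono (Icc_subset_Icc hrt₁ hsB.1.2)
    · intro x hx
      rw [interior_Icc] at hx
      have hx1 : t₁ ≤ x := le_trans hrt₁ (le_of_lt hx.1)
      refine hder x (le_trans ht₁ hx1) ⟨le_of_lt (hafter x hx.1 (le_of_lt hx.2)), ?_⟩
      exact le_of_lt (hbefore x hx1 hx.2)
  have := hanti (left_mem_Icc.2 (le_of_lt hrltS)) (right_mem_Icc.2 (le_of_lt hrltS)) hrltS
  linarith

/-- Helper: a function bounded on `[0,∞)` cannot have derivative `≤ -m < 0` for all `t ≥ T`. -/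
lemma aux_no_drift (f : ℝ → ℝ) (hc : ContinuousOn f (Ici 0))
    (hd : ∀ t > (0:ℝ), DifferentiableAt ℝ f t)
    (M : ℝ) (hM : ∀ t ≥ (0:ℝ), |f t| ≤ M)
    (m T : ℝ) (hm : 0 < m) (hT : 0 < T)
    (hder : ∀ t ≥ T, deriv f t ≤ -m) : False := by
  have hkey : ∀ t ≥ T, f t ≤ f T - m * (t - T) := by
    intro t ht
    set g : ℝ → ℝ := fun x => f x + m * x with hg
    have hganti : AntitoneOn g (Ici T) := by
      apply antitoneOn_of_deriv_nonpos (convex_Ici T)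
      · exact (hc.mono (fun x hx => le_trans (le_of_lt hT) hx)).add
          (continuous_const.mul continuous_id).continuousOn
      · intro x hx
        rw [interior_Ici] at hx
        exact ((hd x (lt_trans hT hx)).add ((differentiable_id.const_mul m) x)).differentiableWithinAt
      · intro x hx
        rw [interior_Ici] at hx
        have hdg : deriv g x = deriv f x + m := by
          have h1 : HasDerivAt g (deriv f x + m * 1) x :=
            ((hd x (lt_trans hT hx)).hasDerivAt).add ((hasDerivAt_id x).const_mul m)
          rw [mul_one] at h1
          exact h1.deriv
        rw [hdg]
        have := hder x (le_of_lt hx)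
        linarith
    have := hganti self_mem_Ici ht ht
    simp only [hg] at this
    linarith [this]
  have hTM := hM T (le_of_lt hT)
  have hfT : -M ≤ f T := (abs_le.1 hTM).1
  have htpos : 0 < (f T + M + 1) / m := div_pos (by linarith) hm
  have htT : T ≤ T + (f T + M + 1) / m := by linarith
  have h1 := hkey _ htT
  have h2 : m * (T + (f T + M + 1) / m - T) = f T + M + 1 := by
    rw [add_sub_cancel_left]
    field_simp
  rw [h2] at h1
  have h3 := (abs_le.1 (hM _ (le_trans (le_of_lt hT) htT))).1
  linarith

/-- A bounded C¹ solution of `(1/(4π)) ζ' + F(ζ) = λ` with decaying source `λ`,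
where `F = U'` for a confining `C²` potential `U`, converges to a zero of `F`,
provided the zero set of `F` contains no nondegenerate interval. -/
theorem ode_attraction_to_zero_of_F
    (U F ζ lam : ℝ → ℝ)
    (hU : ContDiff ℝ 2 U)
    (hUtop : Tendsto U atTop atTop) (hUbot : Tendsto U atBot atTop)
    (hF : F = deriv U)
    (hζ : ContDiffOn ℝ 1 ζ (Ici 0))
    (hbdd : ∃ M : ℝ, ∀ t ≥ (0:ℝ), |ζ t| ≤ M)
    (hlam : ContinuousOn lam (Ici 0))
    (hlam0 : Tendsto lam atTop (nhds 0))
    (hODE : ∀ t ≥ (0:ℝ), (1 / (4 * π)) * derivWithin ζ (Ici 0) t + F (ζ t) = lam t)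
    (hQ : ∀ a b : ℝ, a < b → ¬ (Icc a b ⊆ {q : ℝ | F q = 0})) :
    ∃ q : ℝ, F q = 0 ∧ Tendsto ζ atTop (nhds q) := by
  obtain ⟨M, hM⟩ := hbdd
  have hπ : (0:ℝ) < 4 * π := by positivity
  have hFcont : Continuous F := hF ▸ hU.continuous_deriv one_le_two
  have hζcont : ContinuousOn ζ (Ici 0) := hζ.continuousOn
  have hζdiffOn : DifferentiableOn ℝ ζ (Ici 0) := hζ.differentiableOn one_ne_zero
  have hζdiff : ∀ t > (0:ℝ), DifferentiableAt ℝ ζ t := fun t ht =>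
    hζdiffOn.differentiableAt (Ici_mem_nhds ht)
  have hderiv : ∀ t > (0:ℝ), deriv ζ t = 4 * π * (lam t - F (ζ t)) := by
    intro t ht
    have h1 := hODE t (le_of_lt ht)
    rw [derivWithin_of_mem_nhds (Ici_mem_nhds ht)] at h1
    field_simp at h1 ⊢
    linarith
  -- boundedness facts
  have hbddAbove : IsBoundedUnder (· ≤ ·) atTop ζ :=
    isBoundedUnder_of_eventually_le (a := M)
      ((eventually_ge_atTop 0).mono fun t ht => (abs_le.1 (hM t ht)).2)
  have hbddBelow : IsBoundedUnder (· ≥ ·) atTop ζ :=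
    isBoundedUnder_of_eventually_ge (a := -M)
      ((eventually_ge_atTop 0).mono fun t ht => (abs_le.1 (hM t ht)).1)
  set a := liminf ζ atTop with ha
  set b := limsup ζ atTop with hb
  have hab : a ≤ b := liminf_le_limsup hbddAbove hbddBelow
  -- Main claim: every point strictly between a and b is a zero of F
  have hmain : ∀ c, a < c → c < b → F c = 0 := by
    intro c hac hcb
    by_contra hFc
    have hδ : 0 < |F c| / 2 := by positivity
    set δ := |F c| / 2 with hδdef
    -- choose ε
    obtain ⟨ε₀, hε₀, hball⟩ := Metric.continuous_iff.1 hFcont c δ hδ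
    set ε := min (ε₀ / 2) (min ((c - a) / 2) ((b - c) / 2)) with hε
    have hεpos : 0 < ε := by
      apply lt_min (by linarith)
      apply lt_min <;> linarith
    have hεa : a < c - ε := by
      have : ε ≤ (c - a) / 2 := le_trans (min_le_right _ _) (min_le_left _ _)
      linarith
    have hεb : c + ε < b := by
      have : ε ≤ (b - c) / 2 := le_trans (min_le_right _ _) (min_le_right _ _)
      linarith
    have hFnear : ∀ x ∈ Icc (c - ε) (c + ε), |F x - F c| < δ := by
      intro x hx
      apply hball
      rw [Real.dist_eq, abs_sub_lt_iff]
      have h1 : ε ≤ ε₀ / 2 := min_le_left _ _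
      constructor <;> [linarith [hx.2]; linarith [hx.1]]
    -- eventually |lam| < δ
    have hlamev : ∀ᶠ t in atTop, |lam t| < δ := by
      have := Metric.tendsto_nhds.1 hlam0 δ hδ
      simpa [Real.dist_eq] using this
    obtain ⟨T₀, hT₀⟩ := eventually_atTop.1 hlamev
    set T := max T₀ 1 with hT
    have hTpos : (0:ℝ) < T := lt_of_lt_of_le one_pos (le_max_right _ _)
    have hlamT : ∀ t ≥ T, |lam t| < δ := fun t ht => hT₀ t (le_trans (le_max_left _ _) ht)
    rcases lt_or_gt_of_ne hFc with hneg | hpos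
    · -- F c < 0 : apply upcrossing lemma to -ζ
      have hFlt : ∀ x ∈ Icc (c - ε) (c + ε), F x < -δ := by
        intro x hx
        have h := (abs_sub_lt_iff.1 (hFnear x hx)).1
        rw [hδdef, abs_of_neg hneg] at h ⊢
        linarith
      have hup := aux_no_upcrossing (fun t => -ζ t)
        (hζcont.neg) (fun t ht => (hζdiff t ht).neg)
        (-(c + ε)) (-(c - ε)) T (by linarith) hTpos
        (by
          intro t ht htmem
          have ht0 : (0:ℝ) < t := lt_of_lt_of_le hTpos ht
          have hmem : ζ t ∈ Icc (c - ε) (c + ε) := by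
            simp only [mem_Icc] at htmem ⊢
            constructor <;> linarith [htmem.1, htmem.2]
          have hd1 : deriv (fun t => -ζ t) t = -deriv ζ t := by
            simpa using deriv.neg (f := ζ) (x := t)
          rw [hd1, hderiv t ht0]
          have h1 := hFlt _ hmem
          have h2 := (abs_lt.1 (hlamT t ht)).1
          have : lam t - F (ζ t) > 0 := by linarith
          nlinarith)
      -- find t₁ ≥ T with ζ t₁ > c + ε (frequently, since c+ε < b = limsup)
      have hfreq1 : ∃ᶠ t in atTop, c + ε < ζ t :=
        frequently_lt_of_lt_limsup (hbddBelow.isCoboundedUnder_le) hεb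
      obtain ⟨t₁, ht₁, ht₁T⟩ := (hfreq1.and_eventually (eventually_ge_atTop T)).exists
      -- find t₂ ≥ t₁ with ζ t₂ < c - ε
      have hfreq2 : ∃ᶠ t in atTop, ζ t < c - ε :=
        frequently_lt_of_liminf_lt (hbddAbove.isCoboundedUnder_ge) hεa
      obtain ⟨t₂, ht₂, ht₂t₁⟩ := (hfreq2.and_eventually (eventually_ge_atTop t₁)).exists
      have : -ζ t₂ < -(c - ε) := hup t₁ ht₁T (show -ζ t₁ < -(c + ε) by linarith) t₂ ht₂t₁
      linarith
    · -- F c > 0 : apply upcrossing lemma to ζ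
      have hFgt : ∀ x ∈ Icc (c - ε) (c + ε), δ < F x := by
        intro x hx
        have h := (abs_sub_lt_iff.1 (hFnear x hx)).2
        rw [hδdef, abs_of_pos hpos] at h ⊢
        linarith
      have hup := aux_no_upcrossing ζ hζcont hζdiff (c - ε) (c + ε) T (by linarith) hTpos
        (by
          intro t ht htmem
          have ht0 : (0:ℝ) < t := lt_of_lt_of_le hTpos ht
          rw [hderiv t ht0]
          have h1 := hFgt _ htmem
          have h2 := (abs_lt.1 (hlamT t ht)).2
          have : lam t - F (ζ t) < 0 := by linarith
          nlinarith)
      have hfreq1 : ∃ᶠ t in atTop, ζ t < c - ε :=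
        frequently_lt_of_liminf_lt (hbddAbove.isCoboundedUnder_ge) hεa
      obtain ⟨t₁, ht₁, ht₁T⟩ := (hfreq1.and_eventually (eventually_ge_atTop T)).exists
      have hfreq2 : ∃ᶠ t in atTop, c + ε < ζ t :=
        frequently_lt_of_lt_limsup (hbddBelow.isCoboundedUnder_le) hεb
      obtain ⟨t₂, ht₂, ht₂t₁⟩ := (hfreq2.and_eventually (eventually_ge_atTop t₁)).exists
      have := hup t₁ ht₁T ht₁ t₂ ht₂t₁
      linarith
  -- therefore a = b
  have haeqb : a = b := by
    by_contra hne
    have hlt : a < b := lt_of_le_of_ne hab hne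
    set a' := a + (b - a) / 4 with ha'
    set b' := b - (b - a) / 4 with hb'
    have ha'b' : a' < b' := by rw [ha', hb']; linarith
    refine hQ a' b' ha'b' (fun x hx => ?_)
    have h1 : a < x := by have := hx.1; rw [ha'] at this; linarith
    have h2 : x < b := by have := hx.2; rw [hb'] at this; linarith
    exact hmain x h1 h2
  -- hence ζ converges to a
  have htend : Tendsto ζ atTop (nhds a) :=
    tendsto_of_liminf_eq_limsup rfl haeqb.symm hbddAbove hbddBelow
  refine ⟨a, ?_, htend⟩
  -- finally F a = 0
  by_contra hFa
  have htendF : Tendsto (fun t => lam t - F (ζ t)) atTop (nhds (0 - F a)) :=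
    hlam0.sub ((hFcont.tendsto a).comp htend)
  rw [zero_sub] at htendF
  rcases lt_or_gt_of_ne hFa with hneg | hpos
  · -- F a < 0 : deriv ζ eventually ≥ 2π(-F a) > 0, so -ζ drifts to -∞
    have hev : ∀ᶠ t in atTop, lam t - F (ζ t) > -F a / 2 := by
      apply htendF.eventually (eventually_gt_nhds (by linarith))
    obtain ⟨T₀, hT₀⟩ := eventually_atTop.1 hev
    set T := max T₀ 1 with hT
    have hTpos : (0:ℝ) < T := lt_of_lt_of_le one_pos (le_max_right _ _)
    refine aux_no_drift (fun t => -ζ t) hζcont.neg (fun t ht => (hζdiff t ht).neg)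
      M (fun t ht => by simpa [abs_neg] using hM t ht)
      (4 * π * (-F a / 2)) T (mul_pos hπ (by linarith)) hTpos ?_
    intro t ht
    have ht0 : (0:ℝ) < t := lt_of_lt_of_le hTpos ht
    have hd1 : deriv (fun t => -ζ t) t = -deriv ζ t := by
      simpa using deriv.neg (f := ζ) (x := t)
    rw [hd1, hderiv t ht0]
    have := hT₀ t (le_trans (le_max_left _ _) ht)
    nlinarith
  · -- F a > 0 : deriv ζ eventually ≤ -2π F a < 0, so ζ drifts to -∞
    have hev : ∀ᶠ t in atTop, lam t - F (ζ t) < -F a / 2 := by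
      apply htendF.eventually (eventually_lt_nhds (by linarith))
    obtain ⟨T₀, hT₀⟩ := eventually_atTop.1 hev
    set T := max T₀ 1 with hT
    have hTpos : (0:ℝ) < T := lt_of_lt_of_le one_pos (le_max_right _ _)
    refine aux_no_drift ζ hζcont hζdiff M hM (4 * π * (F a / 2)) T (by positivity) hTpos ?_
    intro t ht
    have ht0 : (0:ℝ) < t := lt_of_lt_of_le hTpos ht
    rw [hderiv t ht0]
    have := hT₀ t (le_trans (le_max_left _ _) ht)
    nlinarith
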